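/- For any nonempty configuration F ⊆ X, the total cost FacLoc(F) = sum_{x_i in F} f_i + sum_{j=1}^n D(F, x_j) equals the sum of charges: FacLoc(F) = sum_{i=1}^n charge(x_i, F), where charge(x_i, F) = D(x_i, F) + sum_{x_j in F} max(0, r_j - D(x_j, x_i)) and D(x_i, F) = min_{x_j in F} D(x_i, x_j). -/
import Mathlib

open Finset

/-- The facility location cost of a nonempty configuration `F` equals the sum of charges:
`FacLoc(F) = ∑ᵢ charge(xᵢ, F)`, where `f i = ∑ₖ max 0 (r i - D(xᵢ,xₖ))` (the defining
property of the characteristic radii `r i`). -/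
theorem facLoc_eq_sum_charges {X : Type*} [Fintype X] [MetricSpace X]
    (f r : X → ℝ) (hf : ∀ i, 0 < f i) (hr : ∀ i, 0 ≤ r i)
    (hfr : ∀ i, f i = ∑ k, max 0 (r i - dist i k))
    (F : Finset X) (hF : F.Nonempty) :
    (∑ i ∈ F, f i) + (∑ j, F.inf' hF (fun x => dist x j))
      = ∑ i, (F.inf' hF (fun j => dist i j) + ∑ j ∈ F, max 0 (r j - dist j i)) := by
  rw [Finset.sum_add_distrib, Finset.sum_comm]
  have h1 : ∀ j, F.inf' hF (fun x => dist x j) = F.inf' hF (fun x => dist j x) := by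
    intro j; congr 1; ext x; exact dist_comm x j
  simp_rw [h1, hfr]
  ring
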